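/- Let m ≥ 2 and n ≥ 2 be integers. Then E_S(C^3_{m,n}) < E_S(C^3_{m,n+1}); that is, the sum of the absolute values of the eigenvalues of S(m,n) is strictly less than the sum of the absolute values of the eigenvalues of S(m,n+1). In particular, for fixed m the Seidel energy of C^3_{m,n} is strictly increasing in n. -/

import Mathlib

open Polynomial Matrix

/-- The Seidel matrix of the complete 3-uniform bipartite hypergraph `C³_{m,n}`. -/
noncomputable def seidelS (m n : ℕ) : Matrix (Fin m ⊕ Fin n) (Fin m ⊕ Fin n) ℝ :=
  fun i j =>
    if i = j then 0
    else
      match i, j with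
      | Sum.inl _, Sum.inl _ => 1 - 2 * (n : ℝ)
      | Sum.inr _, Sum.inr _ => 1 - 2 * (m : ℝ)
      | _, _ => 1 - 2 * ((m : ℝ) + (n : ℝ) - 2)

/-- Type-I hyperedge-deleted Seidel matrix. -/
noncomputable def seidelI (m n : ℕ) : Matrix (Fin m ⊕ Fin n) (Fin m ⊕ Fin n) ℝ :=
  fun i j =>
    match i, j with
    | Sum.inl a, Sum.inr b =>
        if a.val = 0 ∧ b.val ≤ 1 then 1 - 2 * ((m : ℝ) + (n : ℝ) - 3)
        else seidelS m n (Sum.inl a) (Sum.inr b)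
    | Sum.inr b, Sum.inl a =>
        if a.val = 0 ∧ b.val ≤ 1 then 1 - 2 * ((m : ℝ) + (n : ℝ) - 3)
        else seidelS m n (Sum.inr b) (Sum.inl a)
    | Sum.inr a, Sum.inr b =>
        if (a.val = 0 ∧ b.val = 1) ∨ (a.val = 1 ∧ b.val = 0) then 1 - 2 * ((m : ℝ) - 1)
        else seidelS m n (Sum.inr a) (Sum.inr b)
    | Sum.inl a, Sum.inl b => seidelS m n (Sum.inl a) (Sum.inl b)

/-- Type-II hyperedge-deleted Seidel matrix. -/
noncomputable def seidelII (m n : ℕ) : Matrix (Fin m ⊕ Fin n) (Fin m ⊕ Fin n) ℝ :=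
  fun i j =>
    match i, j with
    | Sum.inl a, Sum.inl b =>
        if (a.val = 0 ∧ b.val = 1) ∨ (a.val = 1 ∧ b.val = 0) then 1 - 2 * ((n : ℝ) - 1)
        else seidelS m n (Sum.inl a) (Sum.inl b)
    | Sum.inl a, Sum.inr b =>
        if a.val ≤ 1 ∧ b.val = 0 then 1 - 2 * ((m : ℝ) + (n : ℝ) - 3)
        else seidelS m n (Sum.inl a) (Sum.inr b)
    | Sum.inr b, Sum.inl a =>
        if a.val ≤ 1 ∧ b.val = 0 then 1 - 2 * ((m : ℝ) + (n : ℝ) - 3)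
        else seidelS m n (Sum.inr b) (Sum.inl a)
    | Sum.inr a, Sum.inr b => seidelS m n (Sum.inr a) (Sum.inr b)

/-- Seidel energy: sum of absolute values of the eigenvalues (roots of the
characteristic polynomial, with multiplicity). -/
noncomputable def seidelEnergy {k : Type*} [Fintype k] [DecidableEq k]
    (M : Matrix k k ℝ) : ℝ :=
  (M.charpoly.roots.map (fun x => |x|)).sum

set_option linter.unnecessarySeqFocus false in
lemma det_seidel (m n : ℕ) (hm : 1 ≤ m) (hn : 1 ≤ n) (x : ℝ)
    (ha : x + (1 - 2*(n:ℝ)) ≠ 0) (hb : x + (1 - 2*(m:ℝ)) ≠ 0) :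
    (Matrix.of (fun i j => (if i = j then x else 0) - seidelS m n i j)).det =
      (x + (1 - 2*(n:ℝ)))^(m-1) * (x + (1 - 2*(m:ℝ)))^(n-1) *
        ((x - (1 - 2*(n:ℝ))*((m:ℝ)-1)) * (x - (1 - 2*(m:ℝ))*((n:ℝ)-1))
          - (m:ℝ)*(n:ℝ)*(1 - 2*((m:ℝ)+(n:ℝ)-2))^2) := by
  set a : ℝ := 1 - 2*(n:ℝ) with ha'
  set b : ℝ := 1 - 2*(m:ℝ) with hb'
  set c : ℝ := 1 - 2*((m:ℝ)+(n:ℝ)-2) with hc'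
  set d : Fin m ⊕ Fin n → ℝ := Sum.elim (fun _ => x + a) (fun _ => x + b) with hd
  set U : Matrix (Fin m ⊕ Fin n) (Fin 2) ℝ :=
    fun i t => Sum.elim (fun _ => if t = 0 then (1:ℝ) else 0) (fun _ => if t = 1 then 1 else 0) i with hU
  set V : Matrix (Fin 2) (Fin m ⊕ Fin n) ℝ :=
    fun t j => Sum.elim (fun _ => if t = 0 then a else c) (fun _ => if t = 0 then c else b) j with hV
  set E : Matrix (Fin m ⊕ Fin n) (Fin m ⊕ Fin n) ℝ := Matrix.diagonal (fun i => (d i)⁻¹) with hE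
  have hdne : ∀ i, d i ≠ 0 := by rintro (p|p) <;> simpa [d] using ‹_›
  have h1 : (Matrix.of (fun i j => (if i = j then x else 0) - seidelS m n i j)) =
      Matrix.diagonal d - U * V := by
    ext i j
    rw [Matrix.sub_apply, Matrix.mul_apply]
    rcases i with p|p <;> rcases j with q|q
    · by_cases h : p = q <;>
        simp [seidelS, Matrix.mul_apply, Fin.sum_univ_two, Matrix.diagonal, d, U, V, h,
          Matrix.sub_apply] <;> ring
    · simp [seidelS, Matrix.mul_apply, Fin.sum_univ_two, Matrix.diagonal, d, U, V,
        Matrix.sub_apply]; ring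
    · simp [seidelS, Matrix.mul_apply, Fin.sum_univ_two, Matrix.diagonal, d, U, V,
        Matrix.sub_apply]; ring
    · by_cases h : p = q <;>
        simp [seidelS, Matrix.mul_apply, Fin.sum_univ_two, Matrix.diagonal, d, U, V, h,
          Matrix.sub_apply] <;> ring
  have h2 : Matrix.diagonal d * E = 1 := by
    rw [hE, Matrix.diagonal_mul_diagonal]
    ext i j
    by_cases h : i = j <;>
      simp [h, Matrix.diagonal, Matrix.one_apply, mul_inv_cancel₀ (hdne _)]
  have h3 : Matrix.diagonal d - U * V = Matrix.diagonal d * (1 - (E * U) * V) := by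
    rw [Matrix.mul_sub, mul_one, ← Matrix.mul_assoc, ← Matrix.mul_assoc, h2, Matrix.one_mul]
  rw [h1, h3, Matrix.det_mul, Matrix.det_one_sub_mul_comm]
  have hdet : (Matrix.diagonal d).det = (x+a)^m * (x+b)^n := by
    rw [Matrix.det_diagonal, Fintype.prod_sum_type]
    simp [d]
  rw [hdet]
  have hW : ∀ t s, (V * (E * U)) t s =
      (if t = 0 then (if s = 0 then (m:ℝ)*(a*(x+a)⁻¹) else (n:ℝ)*(c*(x+b)⁻¹))
       else (if s = 0 then (m:ℝ)*(c*(x+a)⁻¹) else (n:ℝ)*(b*(x+b)⁻¹))) := by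
    intro t s
    rw [Matrix.mul_apply]
    have : ∀ i, (E * U) i s = (d i)⁻¹ * U i s := by
      intro i; rw [hE, Matrix.diagonal_mul]
    simp_rw [this]
    rw [Fintype.sum_sum_type]
    fin_cases t <;> fin_cases s <;>
      simp [U, V, d, Finset.sum_const, mul_comm, mul_assoc, mul_left_comm]
  rw [show (1 : Matrix (Fin 2) (Fin 2) ℝ) - V * (E * U) =
      Matrix.of ![![1 - (m:ℝ)*(a*(x+a)⁻¹), -((n:ℝ)*(c*(x+b)⁻¹))],
                  ![-((m:ℝ)*(c*(x+a)⁻¹)), 1 - (n:ℝ)*(b*(x+b)⁻¹)]] by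
    ext t s
    fin_cases t <;> fin_cases s <;>
      simp [hW, Matrix.one_apply, Matrix.sub_apply]]
  rw [Matrix.det_fin_two]
  simp only [Matrix.of_apply, Matrix.cons_val', Matrix.cons_val_zero, Matrix.cons_val_one,
    Matrix.head_cons, Matrix.empty_val', Matrix.cons_val_fin_one, Matrix.head_fin_const]
  have hm1 : (x+a)^m = (x+a)^(m-1)*(x+a) := by
    rw [← pow_succ]; congr 1; omega
  have hn1 : (x+b)^n = (x+b)^(n-1)*(x+b) := by
    rw [← pow_succ]; congr 1; omega
  rw [hm1, hn1]
  field_simp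
  ring

lemma eval_charpoly' {k : Type*} [Fintype k] [DecidableEq k] (M : Matrix k k ℝ) (x : ℝ) :
    (M.charpoly).eval x = (Matrix.of (fun i j => (if i = j then x else 0) - M i j)).det := by
  rw [Matrix.charpoly, ← Polynomial.coe_evalRingHom, RingHom.map_det]
  congr 1
  ext i j
  by_cases h : i = j <;> simp [h, charmatrix_apply, Matrix.diagonal]

lemma charpoly_seidel (m n : ℕ) (hm : 1 ≤ m) (hn : 1 ≤ n) (l1 l2 : ℝ)
    (hsum : l1 + l2 = (1 - 2*(n:ℝ))*((m:ℝ)-1) + (1 - 2*(m:ℝ))*((n:ℝ)-1))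
    (hprod : l1 * l2 = ((1 - 2*(n:ℝ))*((m:ℝ)-1)) * ((1 - 2*(m:ℝ))*((n:ℝ)-1))
      - (m:ℝ)*(n:ℝ)*(1 - 2*((m:ℝ)+(n:ℝ)-2))^2) :
    (seidelS m n).charpoly =
      (X - C (2*(n:ℝ)-1))^(m-1) * (X - C (2*(m:ℝ)-1))^(n-1) *
        ((X - C l1) * (X - C l2)) := by
  apply Polynomial.eq_of_infinite_eval_eq
  apply Set.Infinite.mono (s := ({2*(n:ℝ)-1, 2*(m:ℝ)-1} : Set ℝ)ᶜ)
  swap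
  · exact Set.Finite.infinite_compl ((Set.finite_singleton _).insert _)
  intro x hx
  simp only [Set.mem_compl_iff, Set.mem_insert_iff, Set.mem_singleton_iff, not_or] at hx
  obtain ⟨hx1, hx2⟩ := hx
  have ha : x + (1 - 2*(n:ℝ)) ≠ 0 := fun h => hx1 (by linarith)
  have hb : x + (1 - 2*(m:ℝ)) ≠ 0 := fun h => hx2 (by linarith)
  show _ = _
  rw [eval_charpoly', det_seidel m n hm hn x ha hb]
  simp only [eval_mul, eval_pow, eval_sub, eval_X, eval_C]
  have : (x - l1) * (x - l2) =
      (x - (1 - 2*(n:ℝ))*((m:ℝ)-1)) * (x - (1 - 2*(m:ℝ))*((n:ℝ)-1))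
        - (m:ℝ)*(n:ℝ)*(1 - 2*((m:ℝ)+(n:ℝ)-2))^2 := by
    linear_combination (-x) * hsum + hprod
  rw [this]
  congr 2 <;> ring

lemma energy_eq (m n : ℕ) (hm : 2 ≤ m) (hn : 2 ≤ n) :
    seidelEnergy (seidelS m n) =
      ((m:ℝ)-1)*(2*(n:ℝ)-1) + ((n:ℝ)-1)*(2*(m:ℝ)-1)
        + Real.sqrt (((n:ℝ)-(m:ℝ))^2 + 4*(m:ℝ)*(n:ℝ)*(2*(m:ℝ)+2*(n:ℝ)-5)^2) := by
  have hm1 : 1 ≤ m := by omega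
  have hn1 : 1 ≤ n := by omega
  have hmR : (2:ℝ) ≤ (m:ℝ) := by exact_mod_cast hm
  have hnR : (2:ℝ) ≤ (n:ℝ) := by exact_mod_cast hn
  set s : ℝ := (1 - 2*(n:ℝ))*((m:ℝ)-1) + (1 - 2*(m:ℝ))*((n:ℝ)-1) with hs
  set Pr : ℝ := ((1 - 2*(n:ℝ))*((m:ℝ)-1)) * ((1 - 2*(m:ℝ))*((n:ℝ)-1))
      - (m:ℝ)*(n:ℝ)*(1 - 2*((m:ℝ)+(n:ℝ)-2))^2 with hPr
  set D : ℝ := ((n:ℝ)-(m:ℝ))^2 + 4*(m:ℝ)*(n:ℝ)*(2*(m:ℝ)+2*(n:ℝ)-5)^2 with hD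
  have hDval : D = s^2 - 4*Pr := by rw [hD, hs, hPr]; ring
  have hD0 : 0 ≤ D := by rw [hD]; positivity
  have hP0 : Pr ≤ 0 := by
    rw [hPr]; nlinarith [mul_pos (by linarith : (0:ℝ) < (m:ℝ)-1) (by linarith : (0:ℝ) < (n:ℝ)-1),
      sq_nonneg ((m:ℝ)-(n:ℝ)), sq_nonneg ((m:ℝ)+(n:ℝ)-4), mul_pos (by linarith : (0:ℝ) < (m:ℝ)) (by linarith : (0:ℝ) < (n:ℝ))]
  have hsqD : Real.sqrt D * Real.sqrt D = D := Real.mul_self_sqrt hD0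
  have habs : |s| ≤ Real.sqrt D := by
    rw [← Real.sqrt_sq_eq_abs]
    exact Real.sqrt_le_sqrt (by nlinarith)
  set l1 : ℝ := (s + Real.sqrt D)/2 with hl1
  set l2 : ℝ := (s - Real.sqrt D)/2 with hl2
  have hsum : l1 + l2 = s := by rw [hl1, hl2]; ring
  have hprod : l1 * l2 = Pr := by
    rw [hl1, hl2]
    have : (s + Real.sqrt D)/2 * ((s - Real.sqrt D)/2) = (s^2 - Real.sqrt D * Real.sqrt D)/4 := by
      ring
    rw [this, hsqD, hDval]; ring
  have hcp := charpoly_seidel m n hm1 hn1 l1 l2 (by rw [hsum, hs]) (by rw [hprod, hPr])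
  have habs1 : |s| ≤ Real.sqrt D := habs
  have hl1nn : 0 ≤ l1 := by
    rw [hl1]
    have := neg_abs_le s
    linarith
  have hl2np : l2 ≤ 0 := by
    rw [hl2]
    have := le_abs_self s
    linarith
  have hroots : (seidelS m n).charpoly.roots =
      (m-1) • {(2*(n:ℝ)-1)} + ((n-1) • {(2*(m:ℝ)-1)} + ({l1} + {l2})) := by
    rw [hcp]
    rw [Polynomial.roots_mul, Polynomial.roots_mul, Polynomial.roots_mul,
      Polynomial.roots_pow, Polynomial.roots_pow, Polynomial.roots_X_sub_C,
      Polynomial.roots_X_sub_C, Polynomial.roots_X_sub_C, Polynomial.roots_X_sub_C, add_assoc]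
    · exact ((Polynomial.monic_X_sub_C _).mul (Polynomial.monic_X_sub_C _)).ne_zero
    · exact (((Polynomial.monic_X_sub_C _).pow _).mul ((Polynomial.monic_X_sub_C _).pow _)).ne_zero
    · exact ((((Polynomial.monic_X_sub_C _).pow _).mul ((Polynomial.monic_X_sub_C _).pow _)).mul
        ((Polynomial.monic_X_sub_C _).mul (Polynomial.monic_X_sub_C _))).ne_zero
  rw [seidelEnergy, hroots]
  simp only [Multiset.map_add, Multiset.sum_add, Multiset.map_nsmul, Multiset.map_singleton,
    Multiset.sum_singleton]
  rw [Multiset.nsmul_singleton, Multiset.nsmul_singleton, Multiset.sum_replicate,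
    Multiset.sum_replicate, nsmul_eq_mul, nsmul_eq_mul,
    abs_of_nonneg (by linarith : (0:ℝ) ≤ 2*(n:ℝ)-1),
    abs_of_nonneg (by linarith : (0:ℝ) ≤ 2*(m:ℝ)-1),
    abs_of_nonneg hl1nn, abs_of_nonpos hl2np,
    Nat.cast_sub hm1, Nat.cast_sub hn1]
  push_cast
  rw [hl1, hl2]
  ring

theorem stmt16 (m n : ℕ) (hm : 2 ≤ m) (hn : 2 ≤ n) :
    seidelEnergy (seidelS m n) < seidelEnergy (seidelS m (n + 1)) := by
  rw [energy_eq m n hm hn, energy_eq m (n+1) hm (by omega)]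
  have hmR : (2:ℝ) ≤ (m:ℝ) := by exact_mod_cast hm
  have hnR : (2:ℝ) ≤ (n:ℝ) := by exact_mod_cast hn
  push_cast
  have hAB : ((n:ℝ)-(m:ℝ))^2 + 4*(m:ℝ)*(n:ℝ)*(2*(m:ℝ)+2*(n:ℝ)-5)^2 ≤
      ((n:ℝ)+1-(m:ℝ))^2 + 4*(m:ℝ)*((n:ℝ)+1)*(2*(m:ℝ)+2*((n:ℝ)+1)-5)^2 := by
    nlinarith [sq_nonneg (2*(m:ℝ)+2*(n:ℝ)-5), sq_nonneg ((m:ℝ)-(n:ℝ)),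
      mul_pos (by linarith : (0:ℝ) < (m:ℝ)) (by linarith : (0:ℝ) < (n:ℝ))]
  have hs := Real.sqrt_le_sqrt hAB
  nlinarith [hs, hmR, hnR]
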